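/- Let X = lim← Xₙ be the inverse limit of an inverse system of compact metric spaces with short bonding maps φ_{m,n}. Suppose for every ε > 0 there is N such that for all n ≥ N and all m ≥ n the image φ_{m,n}(X_m) is an ε-net in Xₙ. Then the projections ψₙ : X → Xₙ have images that are ε-nets for n large, and Xₙ converges to X in the Gromov–Hausdorff sense. -/
import Mathlib


open Filter
open scoped ENNReal

section PullDefs
variable {X Y : Type*} [MetricSpace X] [MetricSpace Y]

/-- `c 0, …, c n` is an `ε`-chain from `x` to `x'`. -/
def IsEpsChain (ε : ℝ) (n : ℕ) (c : ℕ → X) (x x' : X) : Prop :=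
  c 0 = x ∧ c n = x' ∧ ∀ i < n, dist (c i) (c (i + 1)) ≤ ε

/-- `pull_{f,ε}(x,x')`: infimum over `ε`-chains of the sum of image distances. -/
noncomputable def pullEps (f : X → Y) (ε : ℝ) (x x' : X) : ℝ≥0∞ :=
  ⨅ (n : ℕ) (c : ℕ → X) (_ : IsEpsChain ε n c x x'),
    ∑ i ∈ Finset.range n, edist (f (c i)) (f (c (i + 1)))

/-- `pull_f(x,x') = lim_{ε→0+} pull_{f,ε}(x,x') = sup_{ε>0} pull_{f,ε}(x,x')`. -/
noncomputable def pullMet (f : X → Y) (x x' : X) : ℝ≥0∞ :=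
  ⨆ (ε : ℝ) (_ : 0 < ε), pullEps f ε x x'

/-- `f` is an intrinsic isometry if the pulled-back metric coincides with the metric of `X`. -/
def IsIntrinsicIsometry (f : X → Y) : Prop :=
  Continuous f ∧ ∀ x x', edist x x' = pullMet f x x'

end PullDefs

/-- `pack_ε(X)`: maximal number of points at pairwise distance `> ε`. -/
noncomputable def packNum (X : Type*) [MetricSpace X] (ε : ℝ) : ℕ :=
  sSup {n | ∃ s : Finset X, s.card = n ∧ ∀ x ∈ s, ∀ y ∈ s, x ≠ y → ε < dist x y}

/-- A sequence is compatible with the inverse system `φ`. -/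
def InvCompat {X : ℕ → Type*} (φ : ∀ m n : ℕ, n ≤ m → X m → X n) (x : ∀ n, X n) : Prop :=
  ∀ (m n : ℕ) (h : n ≤ m), φ m n h (x m) = x n

/-- if the images of the bonding maps of an inverse system are eventually
`ε`-nets, then the images of the projections `ψₙ : X → Xₙ` of the inverse limit `X` are
eventually `ε`-nets, and `Xₙ → X` in the Gromov–Hausdorff sense. -/
theorem invLimit_ghLimit (X : ℕ → Type*) [∀ n, MetricSpace (X n)] [∀ n, CompactSpace (X n)]
    [∀ n, Nonempty (X n)] (φ : ∀ m n : ℕ, n ≤ m → X m → X n)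
    (hshort : ∀ (m n : ℕ) (h : n ≤ m), LipschitzWith 1 (φ m n h))
    (hcomp : ∀ (k m n : ℕ) (hmk : m ≤ k) (hnm : n ≤ m) (x : X k),
      φ m n hnm (φ k m hmk x) = φ k n (hnm.trans hmk) x)
    (hid : ∀ (n : ℕ) (x : X n), φ n n le_rfl x = x)
    -- the inverse limit, described abstractly:
    (L : Type*) [MetricSpace L] [CompactSpace L] [Nonempty L]
    (ψ : ∀ n, L → X n) (hψshort : ∀ n, LipschitzWith 1 (ψ n))
    (hψcomp : ∀ (m n : ℕ) (h : n ≤ m) (p : L), φ m n h (ψ m p) = ψ n p)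
    (hψdist : ∀ p q : L, Tendsto (fun n => dist (ψ n p) (ψ n q)) atTop (nhds (dist p q)))
    (hψsep : ∀ p q : L, (∀ n, ψ n p = ψ n q) → p = q)
    (hψsurj : ∀ y : ∀ n, X n, InvCompat φ y → ∃ p : L, ∀ n, ψ n p = y n)
    -- hypothesis: images of bonding maps are eventually ε-nets
    (hnet : ∀ ε > (0 : ℝ), ∃ N : ℕ, ∀ n ≥ N, ∀ (m : ℕ) (h : n ≤ m), ∀ z : X n,
      ∃ w : X m, dist z (φ m n h w) ≤ ε) :
    (∀ ε > (0 : ℝ), ∃ N : ℕ, ∀ n ≥ N, ∀ z : X n, ∃ p : L, dist z (ψ n p) ≤ ε) ∧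
    Tendsto (fun n => GromovHausdorff.ghDist (X n) L) atTop (nhds 0) := by
    classical
  -- Part 1: projections are eventually ε-nets
  have part1 : ∀ ε > (0 : ℝ), ∃ N : ℕ, ∀ n ≥ N, ∀ z : X n, ∃ p : L, dist z (ψ n p) ≤ ε := by
    intro ε hε
    obtain ⟨N, hN⟩ := hnet ε hε
    refine ⟨N, fun n hn z => ?_⟩
    -- choose approximate preimages in X (n + m)
    have hw : ∀ m : ℕ, ∃ w : X (n + m), dist z (φ (n + m) n le_self_add w) ≤ ε := by
      intro m
      exact hN n hn (n + m) le_self_add z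
    choose w hwd using hw
    -- the diagonal sequence in the product space
    set s : ℕ → ∀ k, X k := fun m k =>
      if h : k ≤ n + m then φ (n + m) k h (w m) else Classical.arbitrary _ with hs
    obtain ⟨y, -, g, hg, hlim⟩ := isCompact_univ.tendsto_subseq (s := (Set.univ : Set (∀ k, X k)))
      (x := s) (fun m => Set.mem_univ _)
    have hlimk : ∀ k, Tendsto (fun m => s (g m) k) atTop (nhds (y k)) := fun k =>
      tendsto_pi_nhds.mp hlim k
    have hgm : ∀ m, m ≤ g m := fun m => hg.le_apply
    -- compatibility of the limit
    have hcompat : InvCompat φ y := by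
      intro j k hk
      have h1 : Tendsto (fun m => φ j k hk (s (g m) j)) atTop (nhds (φ j k hk (y j))) :=
        ((hshort j k hk).continuous.tendsto _).comp (hlimk j)
      have h2 : ∀ᶠ m in atTop, φ j k hk (s (g m) j) = s (g m) k := by
        filter_upwards [eventually_ge_atTop j] with m hm
        have hj : j ≤ n + g m := hm.trans (le_trans (hgm m) le_add_self)
        have hkm : k ≤ n + g m := hk.trans hj
        simp only [hs, dif_pos hj, dif_pos hkm, hcomp (n + g m) j k hj hk (w (g m))]
      have h3 : Tendsto (fun m => s (g m) k) atTop (nhds (φ j k hk (y j))) :=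
        h1.congr' h2
      exact tendsto_nhds_unique h3 (hlimk k)
    obtain ⟨p, hp⟩ := hψsurj y hcompat
    refine ⟨p, ?_⟩
    rw [hp n]
    -- dist z (y n) ≤ ε as a limit of dist z (s (g m) n) ≤ ε
    have hdd : Tendsto (fun m => dist z (s (g m) n)) atTop (nhds (dist z (y n))) :=
      (continuous_const.dist continuous_id).continuousAt.tendsto.comp (hlimk n)
    refine le_of_tendsto hdd ?_
    filter_upwards with m
    have hn' : n ≤ n + g m := le_self_add
    simp only [hs, dif_pos hn']
    exact hwd (g m)
  refine ⟨part1, ?_⟩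
  -- monotonicity of projected distances
  have hmono : ∀ (p q : L) (a b : ℕ), a ≤ b → dist (ψ a p) (ψ a q) ≤ dist (ψ b p) (ψ b q) := by
    intro p q a b hab
    have := (hshort b a hab).dist_le_mul (ψ b p) (ψ b q)
    rw [hψcomp b a hab p, hψcomp b a hab q] at this
    simpa using this
  have hle : ∀ (p q : L) (a : ℕ), dist (ψ a p) (ψ a q) ≤ dist p q := by
    intro p q a
    refine ge_of_tendsto (hψdist p q) ?_
    filter_upwards [eventually_ge_atTop a] with b hb using hmono p q a b hb
  -- the key uniform estimate
  have key : ∀ ε > (0 : ℝ), ∃ N : ℕ, ∀ n ≥ N, ∀ p q : L,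
      |dist p q - dist (ψ n p) (ψ n q)| ≤ ε := by
    intro ε hε
    have hε8 : (0 : ℝ) < ε / 8 := by linarith
    obtain ⟨t, htfin, htcov⟩ := (Metric.totallyBounded_iff.mp (isCompact_univ (X := L)).totallyBounded) (ε / 8) hε8
    have hNf : ∀ a b : L, ∃ N : ℕ, ∀ n ≥ N, dist a b - dist (ψ n a) (ψ n b) ≤ ε / 8 := by
      intro a b
      have := (hψdist a b).eventually (eventually_ge_nhds (show dist a b - ε / 8 < dist a b by linarith))
      obtain ⟨N, hN⟩ := this.exists_forall_of_atTop
      exact ⟨N, fun n hn => by linarith [hN n hn]⟩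
    choose Nf hNf' using hNf
    set tF := htfin.toFinset with htF
    set N := tF.sup (fun a => tF.sup (fun b => Nf a b)) with hNdef
    refine ⟨N, fun n hn p q => ?_⟩
    obtain ⟨a, ha, hpa⟩ : ∃ a ∈ t, dist p a < ε / 8 := by
      have := htcov (Set.mem_univ p)
      simp only [Set.mem_iUnion, Metric.mem_ball] at this
      obtain ⟨a, ha, h⟩ := this
      exact ⟨a, ha, h⟩
    obtain ⟨b, hb, hqb⟩ : ∃ b ∈ t, dist q b < ε / 8 := by
      have := htcov (Set.mem_univ q)
      simp only [Set.mem_iUnion, Metric.mem_ball] at this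
      obtain ⟨b, hb, h⟩ := this
      exact ⟨b, hb, h⟩
    have haF : a ∈ tF := htfin.mem_toFinset.mpr ha
    have hbF : b ∈ tF := htfin.mem_toFinset.mpr hb
    have hNab : Nf a b ≤ N := le_trans (Finset.le_sup (f := fun b => Nf a b) hbF)
      (Finset.le_sup (f := fun a => tF.sup (fun b => Nf a b)) haF)
    have h1 : dist a b - dist (ψ n a) (ψ n b) ≤ ε / 8 := hNf' a b n (le_trans hNab hn)
    have h2 : dist p q ≤ dist a b + ε / 4 := by
      have := dist_triangle4 p a b q
      have h' := dist_triangle4 p a b q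
      calc dist p q ≤ dist p a + dist a b + dist b q := dist_triangle4 p a b q
        _ ≤ dist a b + ε / 4 := by rw [dist_comm b q]; linarith
    have h3 : dist (ψ n a) (ψ n b) ≤ dist (ψ n p) (ψ n q) + ε / 4 := by
      have hpa' : dist (ψ n p) (ψ n a) ≤ dist p a := hle p a n
      have hqb' : dist (ψ n q) (ψ n b) ≤ dist q b := hle q b n
      calc dist (ψ n a) (ψ n b) ≤ dist (ψ n a) (ψ n p) + dist (ψ n p) (ψ n q) + dist (ψ n q) (ψ n b) :=
            dist_triangle4 _ _ _ _
        _ ≤ dist (ψ n p) (ψ n q) + ε / 4 := by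
            rw [dist_comm (ψ n a) (ψ n p)]; linarith
    have hub : dist (ψ n p) (ψ n q) ≤ dist p q := hle p q n
    rw [abs_le]
    constructor <;> linarith
  -- conclude GH convergence
  have hbound : ∀ ε > (0 : ℝ), ∃ N : ℕ, ∀ n ≥ N,
      GromovHausdorff.ghDist (X n) L ≤ ε := by
    intro ε hε
    have hε2 : (0 : ℝ) < ε / 2 := by linarith
    obtain ⟨N₁, hN₁⟩ := part1 (ε / 2) hε2
    obtain ⟨N₂, hN₂⟩ := key (ε / 2) hε2
    refine ⟨max N₁ N₂, fun n hn => ?_⟩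
    have hn1 : N₁ ≤ n := le_trans (le_max_left _ _) hn
    have hn2 : N₂ ≤ n := le_trans (le_max_right _ _) hn
    have hsymm : GromovHausdorff.ghDist (X n) L = GromovHausdorff.ghDist L (X n) := by
      simp [GromovHausdorff.ghDist, dist_comm]
    rw [hsymm]
    have := GromovHausdorff.ghDist_le_of_approx_subsets
      (X := L) (Y := X n) (s := (Set.univ : Set L)) (fun p => ψ n p.1)
      (ε₁ := 0) (ε₂ := ε) (ε₃ := ε / 2)
      (fun x => ⟨x, Set.mem_univ x, by simp⟩)
      (fun x => by
        obtain ⟨p, hp⟩ := hN₁ n hn1 x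
        exact ⟨⟨p, Set.mem_univ p⟩, hp⟩)
      (fun x y => by
        have := hN₂ n hn2 x.1 y.1
        have habs : |dist x.1 y.1 - dist (ψ n x.1) (ψ n y.1)| ≤ ε := le_trans this (by linarith)
        simpa [Subtype.dist_eq] using habs)
    linarith
  rw [Metric.tendsto_atTop]
  intro ε hε
  obtain ⟨N, hN⟩ := hbound (ε / 2) (by linarith)
  refine ⟨N, fun n hn => ?_⟩
  have h0 : (0 : ℝ) ≤ GromovHausdorff.ghDist (X n) L := dist_nonneg
  have := hN n hn
  rw [Real.dist_eq, sub_zero, abs_of_nonneg h0]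
  linarith
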